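/- Let p ≥ 2 and n ≥ 1 be integers and let e_1, …, e_{p+1} be nonnegative integers. Then the number of (p+1)-tuples (T_1, …, T_{p+1}) of sets with T_{p+1} ⊆ T_p ⊆ … ⊆ T_1 ⊆ [1,n], |T_i| = e_i for all i, and such that for every k ∈ T_{p+1} with k ≥ 2 one has k−1 ∈ T_1, equals C(e_1, e_{p+1})·C(n−e_{p+1}, e_1−e_{p+1})·∏_{k=1}^{p−1} C(e_k − e_{p+1}, e_{k+1} − e_{p+1}). -/

import Mathlib

/-- Binomial coefficient `C(a,b)` for integers, with the convention that it is `0`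
when `a < 0` or `b < 0` (and, as usual, when `b > a`), and `C(a,0) = 1` for `a ≥ 0`. -/
def intChoose (a b : ℤ) : ℕ :=
  if 0 ≤ a ∧ 0 ≤ b then a.toNat.choose b.toNat else 0


lemma intChoose_coe (a b : ℕ) : intChoose a b = a.choose b := by
  simp [intChoose]

lemma intChoose_neg_left {a b : ℤ} (h : a < 0) : intChoose a b = 0 := by
  simp [intChoose]; intro h'; omega

lemma intChoose_neg_right {a b : ℤ} (h : b < 0) : intChoose a b = 0 := by
  simp [intChoose]; intro h'; omega

lemma intChoose_sub_coe (a b c : ℕ) (h1 : c ≤ a) (h2 : c ≤ b) :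
    intChoose ((a:ℤ) - c) ((b:ℤ) - c) = (a - c).choose (b - c) := by
  have : ((a:ℤ) - c) = ((a - c : ℕ) : ℤ) := by omega
  have h2' : ((b:ℤ) - c) = ((b - c : ℕ) : ℤ) := by omega
  rw [this, h2', intChoose_coe]

lemma intChoose_pascal (x y : ℤ) :
    intChoose x y = intChoose (x-1) (y-1) + intChoose (x-1) y + (if x = 0 ∧ y = 0 then 1 else 0) := by
  rcases lt_trichotomy y 0 with hy | hy | hy
  · rw [intChoose_neg_right hy, intChoose_neg_right (by omega), intChoose_neg_right hy,
      if_neg (by omega)]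
  · subst hy
    rcases lt_trichotomy x 0 with hx | hx | hx
    · rw [intChoose_neg_left hx, intChoose_neg_left (by omega), intChoose_neg_left (by omega),
        if_neg (by omega)]
    · subst hx
      rw [intChoose_neg_left (a := 0-1) (b := 0-1) (by norm_num),
        intChoose_neg_left (a := 0-1) (b := 0) (by norm_num), if_pos ⟨rfl, rfl⟩]
      simp [intChoose]
    · rw [intChoose_neg_right (by norm_num : (0:ℤ)-1 < 0), if_neg (by omega)]
      have h1 : intChoose x 0 = 1 := by simp [intChoose, hx.le]
      have h2 : intChoose (x-1) 0 = 1 := by simp [intChoose]; omega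
      rw [h1, h2]
  · rcases lt_trichotomy x 0 with hx | hx | hx
    · rw [intChoose_neg_left hx, intChoose_neg_left (by omega), intChoose_neg_left (by omega),
        if_neg (by omega)]
    · subst hx
      have h1 : intChoose 0 y = 0 := by
        have : (0:ℤ) = ((0:ℕ):ℤ) := rfl
        rw [show y = ((y.toNat : ℕ) : ℤ) by omega, this, intChoose_coe,
          Nat.choose_eq_zero_of_lt (by omega)]
      rw [h1, intChoose_neg_left (a := 0-1) (b := y-1) (by norm_num),
        intChoose_neg_left (a := 0-1) (b := y) (by norm_num), if_neg (by omega)]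
    · obtain ⟨a, rfl⟩ : ∃ a : ℕ, x = (a:ℤ) + 1 := ⟨(x-1).toNat, by omega⟩
      obtain ⟨b, rfl⟩ : ∃ b : ℕ, y = (b:ℤ) + 1 := ⟨(y-1).toNat, by omega⟩
      have e1 : ((a:ℤ) + 1 - 1) = (a:ℤ) := by ring
      have e2 : ((b:ℤ) + 1 - 1) = (b:ℤ) := by ring
      rw [e1, e2, if_neg (by omega)]
      have c1 : ((a:ℤ)+1) = ((a+1 : ℕ) : ℤ) := by push_cast; ring
      have c2 : ((b:ℤ)+1) = ((b+1 : ℕ) : ℤ) := by push_cast; ring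
      rw [c1, c2, intChoose_coe, intChoose_coe, intChoose_coe, Nat.choose_succ_succ]
      simp only [Nat.succ_eq_add_one]
      omega

open Finset

open scoped Classical in
noncomputable def pairsX (n a m : ℕ) : Finset (Finset ℕ × Finset ℕ) :=
  ((Finset.Icc 1 n).powerset ×ˢ (Finset.Icc 1 n).powerset).filter
    (fun z => z.2 ⊆ z.1 ∧ z.1.card = a ∧ z.2.card = m ∧ ∀ k ∈ z.2, 2 ≤ k → k - 1 ∈ z.1)

open scoped Classical in
noncomputable def pairsH (n a m : ℕ) : Finset (Finset ℕ × Finset ℕ) :=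
  (pairsX n a m).filter (fun z => n ∈ z.1)

lemma mem_pairsX {n a m : ℕ} {z : Finset ℕ × Finset ℕ} :
    z ∈ pairsX n a m ↔ z.1 ⊆ Finset.Icc 1 n ∧ z.2 ⊆ z.1 ∧ z.1.card = a ∧ z.2.card = m ∧
      ∀ k ∈ z.2, 2 ≤ k → k - 1 ∈ z.1 := by
  classical
  simp only [pairsX, Finset.mem_filter, Finset.mem_product, Finset.mem_powerset]
  constructor
  · rintro ⟨⟨h1, h2⟩, h3⟩; exact ⟨h1, h3⟩
  · rintro ⟨h1, h2, h3⟩; exact ⟨⟨h1, h2.trans h1⟩, h2, h3⟩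

lemma mem_pairsH {n a m : ℕ} {z : Finset ℕ × Finset ℕ} :
    z ∈ pairsH n a m ↔ z ∈ pairsX n a m ∧ n ∈ z.1 := by
  classical
  simp [pairsH]

lemma pairsX_zero (a m : ℕ) :
    (pairsX 0 a m).card = if a = 0 ∧ m = 0 then 1 else 0 := by
  classical
  by_cases h : a = 0 ∧ m = 0
  · obtain ⟨rfl, rfl⟩ := h
    rw [if_pos ⟨rfl, rfl⟩, Finset.card_eq_one]
    refine ⟨(∅, ∅), ?_⟩
    ext z
    rw [mem_pairsX, Finset.mem_singleton]
    constructor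
    · rintro ⟨h1, h2, h3, h4, h5⟩
      have hz1 : z.1 = ∅ := by
        have : z.1 ⊆ ∅ := by simpa using h1
        simpa using this
      have hz2 : z.2 = ∅ := by
        have := h2.trans (le_of_eq hz1)
        simpa using this
      exact Prod.ext hz1 hz2
    · rintro rfl
      refine ⟨by simp, by simp, by simp, by simp, by simp⟩
  · rw [if_neg h, Finset.card_eq_zero]
    rw [Finset.eq_empty_iff_forall_notMem]
    intro z hz
    rw [mem_pairsX] at hz
    obtain ⟨h1, h2, h3, h4, h5⟩ := hz
    have hz1 : z.1 = ∅ := by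
      have : z.1 ⊆ ∅ := by simpa using h1
      simpa using this
    have hz2 : z.2 = ∅ := by
      have := h2.trans (le_of_eq hz1)
      simpa using this
    rw [hz1] at h3; rw [hz2] at h4
    simp at h3 h4
    exact h ⟨h3.symm, h4.symm⟩

lemma pairsX_split (n a m : ℕ) (hn : 1 ≤ n) :
    (pairsX n a m).card = (pairsX (n-1) a m).card + (pairsH n a m).card := by
  classical
  have key := Finset.card_filter_add_card_filter_not
    (s := pairsX n a m) (p := fun z => n ∈ z.1)
  have h1 : (pairsX n a m).filter (fun z => n ∈ z.1) = pairsH n a m := by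
    apply Finset.filter_congr_decidable
  have h2 : (pairsX n a m).filter (fun z => ¬ n ∈ z.1) = pairsX (n-1) a m := by
    ext z
    rw [Finset.mem_filter, mem_pairsX, mem_pairsX]
    constructor
    · rintro ⟨⟨ha, hb, hc, hd, he⟩, hnz⟩
      refine ⟨?_, hb, hc, hd, he⟩
      intro x hx
      have := ha hx
      rw [Finset.mem_Icc] at this ⊢
      have : x ≠ n := fun h => hnz (h ▸ hx)
      have := ha hx
      rw [Finset.mem_Icc] at this
      omega
    · rintro ⟨ha, hb, hc, hd, he⟩
      have hsub : z.1 ⊆ Finset.Icc 1 n := by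
        intro x hx
        have := ha hx
        rw [Finset.mem_Icc] at this ⊢
        omega
      refine ⟨⟨hsub, hb, hc, hd, he⟩, ?_⟩
      intro hmem
      have := ha hmem
      rw [Finset.mem_Icc] at this
      omega
  rw [h1, h2] at key
  omega

lemma pairsH_a0 (n m : ℕ) : (pairsH n 0 m).card = 0 := by
  classical
  rw [Finset.card_eq_zero, Finset.eq_empty_iff_forall_notMem]
  intro z hz
  rw [mem_pairsH, mem_pairsX] at hz
  obtain ⟨⟨h1, h2, h3, h4, h5⟩, h6⟩ := hz
  rw [Finset.card_eq_zero] at h3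
  rw [h3] at h6
  simp at h6

lemma pairsH_notS_card (n a m : ℕ) (hn : 1 ≤ n) (ha : 1 ≤ a) :
    ((pairsH n a m).filter (fun z => ¬ n ∈ z.2)).card = (pairsX (n-1) (a-1) m).card := by
  classical
  apply Finset.card_nbij' (fun z => (z.1.erase n, z.2)) (fun z => (insert n z.1, z.2))
  · intro z hz
    rw [Finset.mem_coe, Finset.mem_filter, mem_pairsH, mem_pairsX] at hz
    obtain ⟨⟨⟨h1, h2', h3, h4, h5⟩, h6⟩, h7⟩ := hz
    rw [Finset.mem_coe, mem_pairsX]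
    refine ⟨?_, ?_, ?_, h4, ?_⟩
    · intro x hx
      rw [Finset.mem_erase] at hx
      have := h1 hx.2
      rw [Finset.mem_Icc] at this ⊢
      have := hx.1
      omega
    · intro x hx
      rw [Finset.mem_erase]
      exact ⟨fun h => h7 (h ▸ hx), h2' hx⟩
    · rw [Finset.card_erase_of_mem h6]; omega
    · intro k hk hk2
      rw [Finset.mem_erase]
      have hkin := h5 k hk hk2
      have hkn : k ≤ n := by
        have := h1 (h2' hk)
        rw [Finset.mem_Icc] at this
        omega
      exact ⟨by omega, hkin⟩
  · intro z hz
    rw [Finset.mem_coe, mem_pairsX] at hz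
    obtain ⟨h1, h2', h3, h4, h5⟩ := hz
    have hn1 : n ∉ z.1 := by
      intro h
      have := h1 h
      rw [Finset.mem_Icc] at this
      omega
    have hn2 : n ∉ z.2 := fun h => hn1 (h2' h)
    rw [Finset.mem_coe, Finset.mem_filter, mem_pairsH, mem_pairsX]
    refine ⟨⟨⟨?_, ?_, ?_, h4, ?_⟩, Finset.mem_insert_self _ _⟩, hn2⟩
    · intro x hx
      rw [Finset.mem_insert] at hx
      rcases hx with rfl | hx
      · rw [Finset.mem_Icc]; omega
      · have := h1 hx
        rw [Finset.mem_Icc] at this ⊢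
        omega
    · exact h2'.trans (Finset.subset_insert _ _)
    · rw [Finset.card_insert_of_notMem hn1, h3]; omega
    · intro k hk hk2
      exact Finset.mem_insert_of_mem (h5 k hk hk2)
  · intro z hz
    rw [Finset.mem_coe, Finset.mem_filter, mem_pairsH] at hz
    have h6 := hz.1.2
    ext x
    · simp only [Finset.mem_insert, Finset.mem_erase]
      constructor
      · rintro (rfl | ⟨hx, hx'⟩)
        · exact h6
        · exact hx'
      · intro hx
        by_cases hxn : x = n
        · exact Or.inl hxn
        · exact Or.inr ⟨hxn, hx⟩
    · rfl
  · intro z hz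
    rw [Finset.mem_coe, mem_pairsX] at hz
    obtain ⟨h1, _, _, _, _⟩ := hz
    have hn1 : n ∉ z.1 := by
      intro h
      have := h1 h
      rw [Finset.mem_Icc] at this
      omega
    ext x
    · simp only [Finset.mem_erase, Finset.mem_insert]
      constructor
      · rintro ⟨hx, rfl | hx'⟩
        · exact absurd rfl hx
        · exact hx'
      · intro hx
        refine ⟨fun h => hn1 (h ▸ hx), Or.inr hx⟩
    · rfl

lemma pairsH_split (n a m : ℕ) (hn : 2 ≤ n) (ha : 1 ≤ a) (hm : 1 ≤ m) :
    (pairsH n a m).card = (pairsX (n-1) (a-1) m).card + (pairsH (n-1) (a-1) (m-1)).card := by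
  classical
  have key := Finset.card_filter_add_card_filter_not
    (s := pairsH n a m) (p := fun z => n ∈ z.2)
  have h2 := pairsH_notS_card n a m (by omega) ha
  have h1 : ((pairsH n a m).filter (fun z => n ∈ z.2)).card = (pairsH (n-1) (a-1) (m-1)).card := by
    apply Finset.card_nbij' (fun z => (z.1.erase n, z.2.erase n))
      (fun z => (insert n z.1, insert n z.2))
    · intro z hz
      rw [Finset.mem_coe, Finset.mem_filter, mem_pairsH, mem_pairsX] at hz
      obtain ⟨⟨⟨h1', h2', h3, h4, h5⟩, h6⟩, h7⟩ := hz
      rw [Finset.mem_coe, mem_pairsH, mem_pairsX]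
      have hbound : ∀ x ∈ z.1, x ≤ n := by
        intro x hx
        have := h1' hx
        rw [Finset.mem_Icc] at this
        omega
      refine ⟨⟨?_, ?_, ?_, ?_, ?_⟩, ?_⟩
      · intro x hx
        rw [Finset.mem_erase] at hx
        have := h1' hx.2
        rw [Finset.mem_Icc] at this ⊢
        have := hx.1
        omega
      · intro x hx
        rw [Finset.mem_erase] at hx ⊢
        exact ⟨hx.1, h2' hx.2⟩
      · rw [Finset.card_erase_of_mem h6]; omega
      · rw [Finset.card_erase_of_mem h7]; omega
      · intro k hk hk2
        rw [Finset.mem_erase] at hk ⊢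
        have hkin := h5 k hk.2 hk2
        have : k ≤ n := hbound _ (h2' hk.2)
        have : k ≠ n := hk.1
        refine ⟨by omega, hkin⟩
      · -- n - 1 ∈ z.1.erase n
        rw [Finset.mem_erase]
        have := h5 n h7 (by omega)
        exact ⟨by omega, this⟩
    · intro z hz
      rw [Finset.mem_coe, mem_pairsH, mem_pairsX] at hz
      obtain ⟨⟨h1', h2', h3, h4, h5⟩, h6⟩ := hz
      have hn1 : n ∉ z.1 := by
        intro h
        have := h1' h
        rw [Finset.mem_Icc] at this
        omega
      have hn2 : n ∉ z.2 := fun h => hn1 (h2' h)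
      rw [Finset.mem_coe, Finset.mem_filter, mem_pairsH, mem_pairsX]
      refine ⟨⟨⟨?_, ?_, ?_, ?_, ?_⟩, Finset.mem_insert_self _ _⟩, Finset.mem_insert_self _ _⟩
      · intro x hx
        rw [Finset.mem_insert] at hx
        rcases hx with rfl | hx
        · rw [Finset.mem_Icc]; omega
        · have := h1' hx
          rw [Finset.mem_Icc] at this ⊢
          omega
      · intro x hx
        rw [Finset.mem_insert] at hx ⊢
        rcases hx with rfl | hx
        · exact Or.inl rfl
        · exact Or.inr (h2' hx)
      · rw [Finset.card_insert_of_notMem hn1, h3]; omega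
      · rw [Finset.card_insert_of_notMem hn2, h4]; omega
      · intro k hk hk2
        rw [Finset.mem_insert] at hk
        rcases hk with rfl | hk
        · exact Finset.mem_insert_of_mem h6
        · exact Finset.mem_insert_of_mem (h5 k hk hk2)
    · intro z hz
      rw [Finset.mem_coe, Finset.mem_filter, mem_pairsH] at hz
      have h6 := hz.1.2
      have h7 := hz.2
      ext x
      · simp only [Finset.mem_insert, Finset.mem_erase]
        constructor
        · rintro (rfl | ⟨hx, hx'⟩)
          · exact h6
          · exact hx'
        · intro hx
          by_cases hxn : x = n
          · exact Or.inl hxn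
          · exact Or.inr ⟨hxn, hx⟩
      · simp only [Finset.mem_insert, Finset.mem_erase]
        constructor
        · rintro (rfl | ⟨hx, hx'⟩)
          · exact h7
          · exact hx'
        · intro hx
          by_cases hxn : x = n
          · exact Or.inl hxn
          · exact Or.inr ⟨hxn, hx⟩
    · intro z hz
      rw [Finset.mem_coe, mem_pairsH, mem_pairsX] at hz
      obtain ⟨⟨h1', h2', _, _, _⟩, _⟩ := hz
      have hn1 : n ∉ z.1 := by
        intro h
        have := h1' h
        rw [Finset.mem_Icc] at this
        omega
      have hn2 : n ∉ z.2 := fun h => hn1 (h2' h)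
      ext x
      · simp only [Finset.mem_erase, Finset.mem_insert]
        constructor
        · rintro ⟨hx, rfl | hx'⟩
          · exact absurd rfl hx
          · exact hx'
        · intro hx
          exact ⟨fun h => hn1 (h ▸ hx), Or.inr hx⟩
      · simp only [Finset.mem_erase, Finset.mem_insert]
        constructor
        · rintro ⟨hx, rfl | hx'⟩
          · exact absurd rfl hx
          · exact hx'
        · intro hx
          exact ⟨fun h => hn2 (h ▸ hx), Or.inr hx⟩
  rw [h1, h2] at key
  omega

lemma pairsH_m0 (n a : ℕ) (hn : 1 ≤ n) (ha : 1 ≤ a) :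
    (pairsH n a 0).card = (pairsX (n-1) (a-1) 0).card := by
  classical
  rw [← pairsH_notS_card n a 0 hn ha]
  congr 1
  ext z
  rw [Finset.mem_filter]
  constructor
  · intro h
    refine ⟨h, ?_⟩
    rw [mem_pairsH, mem_pairsX] at h
    have : z.2 = ∅ := Finset.card_eq_zero.mp h.1.2.2.2.1
    rw [this]; simp
  · exact fun h => h.1

lemma pairsH_one (a m : ℕ) :
    pairsH 1 a m = if a = 1 ∧ m = 0 then {(({1} : Finset ℕ), (∅ : Finset ℕ))}
      else if a = 1 ∧ m = 1 then {(({1} : Finset ℕ), ({1} : Finset ℕ))} else ∅ := by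
  classical
  ext z
  rw [mem_pairsH, mem_pairsX]
  constructor
  · rintro ⟨⟨h1, h2, h3, h4, h5⟩, h6⟩
    have hz1 : z.1 = {1} := by
      apply Finset.Subset.antisymm
      · intro x hx
        have := h1 hx
        simpa using this
      · intro x hx
        simp only [Finset.mem_singleton] at hx
        subst hx
        exact h6
    have ha : a = 1 := by rw [← h3, hz1]; simp
    have hz2 : z.2 = ∅ ∨ z.2 = {1} := by
      apply Finset.subset_singleton_iff.mp
      rw [← hz1]; exact h2
    rcases hz2 with hz2 | hz2
    · have hm : m = 0 := by rw [← h4, hz2]; simp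
      rw [if_pos ⟨ha, hm⟩, Finset.mem_singleton]
      exact Prod.ext hz1 hz2
    · have hm : m = 1 := by rw [← h4, hz2]; simp
      rw [if_neg (by omega), if_pos ⟨ha, hm⟩, Finset.mem_singleton]
      exact Prod.ext hz1 hz2
  · intro hz
    split_ifs at hz with hc1 hc2
    · rw [Finset.mem_singleton] at hz
      subst hz
      obtain ⟨rfl, rfl⟩ := hc1
      refine ⟨⟨by simp, by simp, by simp, by simp, by simp⟩, by simp⟩
    · rw [Finset.mem_singleton] at hz
      subst hz
      obtain ⟨rfl, rfl⟩ := hc2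
      refine ⟨⟨by simp, by simp, by simp, by simp, ?_⟩, by simp⟩
      intro k hk hk2
      simp at hk
      omega
    · simp at hz

lemma pairs_counts (n : ℕ) :
    (∀ a m : ℕ, (pairsX n a m).card = a.choose m * intChoose ((n:ℤ)-m) ((a:ℤ)-m)) ∧
    (∀ a m : ℕ, 1 ≤ n → (pairsH n a m).card
      = a.choose m * intChoose ((n:ℤ)-m-1) ((a:ℤ)-m-1) + (if a = m ∧ m = n then 1 else 0)) := by
  induction n with
  | zero =>
    refine ⟨?_, fun a m h => by omega⟩
    intro a m
    rw [pairsX_zero]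
    rcases Nat.eq_zero_or_pos m with rfl | hm
    · rcases Nat.eq_zero_or_pos a with rfl | ha
      · simp [intChoose]
      · rw [if_neg (by omega)]
        push_cast
        rw [sub_zero]
        have h0 := intChoose_coe 0 a
        push_cast at h0
        rw [h0, Nat.choose_eq_zero_of_lt (show 0 < a by omega)]
        omega
    · rw [if_neg (by omega)]
      rcases Nat.lt_or_ge a m with h | h
      · rw [Nat.choose_eq_zero_of_lt h]; omega
      · rw [intChoose_neg_left (by push_cast; try omega)]; omega
  | succ n ih =>
    have hH : ∀ a m : ℕ, (pairsH (n+1) a m).card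
        = a.choose m * intChoose (((n+1:ℕ):ℤ)-m-1) ((a:ℤ)-m-1)
          + (if a = m ∧ m = n+1 then 1 else 0) := by
      intro a m
      rcases Nat.eq_zero_or_pos n with rfl | hn1
      · -- n+1 = 1 base case
        rw [pairsH_one]
        by_cases hc1 : a = 1 ∧ m = 0
        · obtain ⟨rfl, rfl⟩ := hc1
          rw [if_pos ⟨rfl, rfl⟩, Finset.card_singleton, if_neg (by omega)]
          norm_num [intChoose]
        · by_cases hc2 : a = 1 ∧ m = 1
          · obtain ⟨rfl, rfl⟩ := hc2
            rw [if_neg (by omega), if_pos ⟨rfl, rfl⟩, Finset.card_singleton,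
              if_pos ⟨rfl, rfl⟩, intChoose_neg_left (by push_cast; try omega)]
            simp
          · rw [if_neg hc1, if_neg hc2, Finset.card_empty, if_neg (by omega)]
            rcases Nat.lt_or_ge m 2 with hm2 | hm2
            · interval_cases m
              · -- m = 0
                rcases Nat.eq_zero_or_pos a with rfl | ha
                · rw [intChoose_neg_right (by push_cast; try omega)]
                  simp
                · have ha2 : 2 ≤ a := by omega
                  have h0 := intChoose_coe 0 (a-1)
                  push_cast [Nat.cast_sub ha] at h0
                  rw [show ((0:ℕ)+1:ℕ)=(1:ℕ) from rfl,
                    show ((1:ℕ):ℤ)-((0:ℕ):ℤ)-1 = 0 by push_cast; try ring,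
                    show (a:ℤ)-((0:ℕ):ℤ)-1 = (a:ℤ)-1 by push_cast; try ring, h0,
                    Nat.choose_eq_zero_of_lt (show 0 < a - 1 by omega)]
                  omega
              · -- m = 1
                rw [intChoose_neg_left (by push_cast; try omega)]
                omega
            · rw [intChoose_neg_left (by push_cast; try omega)]
              omega
      · rcases Nat.eq_zero_or_pos a with rfl | ha
        · rw [pairsH_a0]
          rcases Nat.eq_zero_or_pos m with rfl | hm
          · rw [intChoose_neg_right (by push_cast; try omega), if_neg (by omega)]
            simp
          · rw [Nat.choose_eq_zero_of_lt (show 0 < m by omega), if_neg (by omega)]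
            simp
        · rcases Nat.eq_zero_or_pos m with rfl | hm
          · rw [pairsH_m0 (n+1) a (by omega) ha, show n+1-1 = n from rfl, ih.1 (a-1) 0]
            rw [if_neg (by omega), Nat.choose_zero_right, Nat.choose_zero_right]
            push_cast [Nat.cast_sub ha]
            ring_nf
          · rw [pairsH_split (n+1) a m (by omega) ha hm, show n+1-1 = n from rfl,
              ih.1 (a-1) m, ih.2 (a-1) (m-1) (by omega)]
            obtain ⟨a', rfl⟩ : ∃ a', a = a'+1 := ⟨a-1, by omega⟩
            obtain ⟨m', rfl⟩ : ∃ m', m = m'+1 := ⟨m-1, by omega⟩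
            simp only [Nat.add_sub_cancel]
            push_cast
            ring_nf
            rw [Nat.add_comm 1 a', Nat.add_comm 1 m']
            have hcs : (a'+1).choose (m'+1) = a'.choose m' + a'.choose (m'+1) :=
              Nat.choose_succ_succ a' m'
            rw [hcs]
            ring
    refine ⟨?_, fun a m _ => hH a m⟩
    intro a m
    rw [pairsX_split (n+1) a m (by omega), show n+1-1 = n from rfl, ih.1 a m, hH a m]
    rw [intChoose_pascal (((n+1:ℕ):ℤ)-m) ((a:ℤ)-m)]
    by_cases h : a = m ∧ m = n+1
    · rw [if_pos h, if_pos (by push_cast; try omega)]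
      obtain ⟨rfl, h2⟩ := h
      rw [Nat.choose_self]
      push_cast
      ring_nf
    · rw [if_neg h, if_neg (by push_cast; try omega)]
      push_cast
      ring_nf

open scoped Classical in
noncomputable def glueF (q : ℕ) (f : ∀ i ∈ Finset.Icc 1 q, Finset ℕ) : ℕ → Finset ℕ :=
  fun i => if h : i ∈ Finset.Icc 1 q then f i h else ∅

open scoped Classical in
noncomputable def funBox (q : ℕ) (W : Finset ℕ) : Finset (ℕ → Finset ℕ) :=
  ((Finset.Icc 1 q).pi (fun _ => W.powerset)).image (glueF q)

lemma mem_funBox {q : ℕ} {W : Finset ℕ} {T : ℕ → Finset ℕ} :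
    T ∈ funBox q W ↔ (∀ i, 1 ≤ i → i ≤ q → T i ⊆ W) ∧ (∀ i, i < 1 ∨ q < i → T i = ∅) := by
  classical
  constructor
  · rintro hT
    simp only [funBox, Finset.mem_image] at hT
    obtain ⟨f, hf, rfl⟩ := hT
    rw [Finset.mem_pi] at hf
    constructor
    · intro i h1 h2
      have hi : i ∈ Finset.Icc 1 q := by simp [Finset.mem_Icc]; omega
      simpa [glueF, hi] using (Finset.mem_powerset.mp (hf i hi))
    · intro i hi
      have : i ∉ Finset.Icc 1 q := by simp [Finset.mem_Icc]; omega
      simp [glueF, this]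
  · rintro ⟨h1, h2⟩
    simp only [funBox, Finset.mem_image]
    refine ⟨fun i _ => T i, ?_, ?_⟩
    · rw [Finset.mem_pi]
      intro i hi
      rw [Finset.mem_Icc] at hi
      exact Finset.mem_powerset.mpr (h1 i hi.1 hi.2)
    · funext i
      by_cases hi : i ∈ Finset.Icc 1 q
      · simp [glueF, hi]
      · rw [Finset.mem_Icc] at hi
        simp only [glueF, dif_neg (by rw [Finset.mem_Icc]; omega : ¬ (i ∈ Finset.Icc 1 q))]
        exact (h2 i (by omega)).symm

lemma nested_subset {T : ℕ → Finset ℕ} {q : ℕ}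
    (h : ∀ k, 1 ≤ k → k < q → T (k+1) ⊆ T k) :
    ∀ i j, 1 ≤ i → i ≤ j → j ≤ q → T j ⊆ T i := by
  intro i j h1 h2 h3
  induction j with
  | zero => omega
  | succ j ih =>
    rcases Nat.eq_or_lt_of_le h2 with rfl | hlt
    · exact subset_rfl
    · exact (h j (by omega) (by omega)).trans (ih (by omega) (by omega))

open scoped Classical in
noncomputable def chainsF (q : ℕ) (U S : Finset ℕ) (d : ℕ → ℕ) : Finset (ℕ → Finset ℕ) :=
  (funBox q U).filter (fun T => T 1 = U ∧ T q = S ∧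
    (∀ k, 1 ≤ k → k < q → T (k+1) ⊆ T k) ∧ (∀ i, 1 ≤ i → i ≤ q → (T i).card = d i))

lemma mem_chainsF {q : ℕ} (hq : 1 ≤ q) {U S : Finset ℕ} {d : ℕ → ℕ} {T : ℕ → Finset ℕ} :
    T ∈ chainsF q U S d ↔ T 1 = U ∧ T q = S ∧
      (∀ k, 1 ≤ k → k < q → T (k+1) ⊆ T k) ∧ (∀ i, 1 ≤ i → i ≤ q → (T i).card = d i) ∧
      (∀ i, i < 1 ∨ q < i → T i = ∅) := by
  classical
  simp only [chainsF, Finset.mem_filter, mem_funBox]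
  constructor
  · rintro ⟨⟨hsub, hvan⟩, h1, h2, h3, h4⟩
    exact ⟨h1, h2, h3, h4, hvan⟩
  · rintro ⟨h1, h2, h3, h4, hvan⟩
    refine ⟨⟨?_, hvan⟩, h1, h2, h3, h4⟩
    intro i hi1 hi2
    rw [← h1]
    exact nested_subset h3 1 i (le_refl 1) hi1 hi2

lemma card_sandwich (U S : Finset ℕ) (hSU : S ⊆ U) (c : ℕ) (hc : S.card ≤ c) :
    (U.powerset.filter fun V => S ⊆ V ∧ V.card = c).card
      = (U.card - S.card).choose (c - S.card) := by
  classical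
  rw [← card_sdiff_of_subset hSU, ← Finset.card_powersetCard (c - S.card) (U \ S)]
  apply Finset.card_bij' (fun V _ => V \ S) (fun W _ => W ∪ S)
  · intro V hV
    simp only [mem_filter, mem_powerset] at hV
    simp only [mem_powersetCard]
    exact ⟨sdiff_subset_sdiff hV.1 (le_refl _), by rw [card_sdiff_of_subset hV.2.1, hV.2.2]⟩
  · intro W hW
    simp only [mem_powersetCard] at hW
    have hWU : W ⊆ U := hW.1.trans sdiff_subset
    have hdisj : Disjoint W S := disjoint_of_subset_left hW.1 sdiff_disjoint
    simp only [mem_filter, mem_powerset]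
    refine ⟨union_subset hWU hSU, subset_union_right, ?_⟩
    rw [card_union_of_disjoint hdisj, hW.2]
    omega
  · intro V hV
    simp only [mem_filter, mem_powerset] at hV
    exact sdiff_union_of_subset hV.2.1
  · intro W hW
    simp only [mem_powersetCard] at hW
    have hdisj : Disjoint W S := disjoint_of_subset_left hW.1 sdiff_disjoint
    rw [union_sdiff_distrib, sdiff_self, sdiff_eq_self_of_disjoint hdisj]
    simp

lemma chainsF_card (q : ℕ) (hq : 1 ≤ q) : ∀ (U S : Finset ℕ), S ⊆ U → ∀ (d : ℕ → ℕ),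
    U.card = d 1 → S.card = d q → (∀ k, 1 ≤ k → k ≤ q → d q ≤ d k) →
    (chainsF q U S d).card = ∏ k ∈ Icc 1 (q-1), (d k - d q).choose (d (k+1) - d q) := by
  classical
  induction q, hq using Nat.le_induction with
  | base =>
    intro U S hSU d hU hS hd
    have hUS : S = U := Finset.eq_of_subset_of_card_le hSU (by omega)
    subst hUS
    rw [show (1:ℕ) - 1 = 0 from rfl, show Finset.Icc 1 0 = ∅ from rfl, Finset.prod_empty]
    rw [Finset.card_eq_one]
    refine ⟨(fun i => if i = 1 then S else ∅), ?_⟩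
    ext T
    rw [mem_chainsF (le_refl 1), Finset.mem_singleton]
    constructor
    · rintro ⟨h1, h2, h3, h4, h5⟩
      funext i
      by_cases hi : i = 1
      · subst hi; simpa using h1
      · simp only [if_neg hi]
        exact h5 i (by omega)
    · rintro rfl
      refine ⟨by simp, by simp, ?_, ?_, ?_⟩
      · intro k hk1 hk2; omega
      · intro i hi1 hi2
        have : i = 1 := by omega
        subst this; simpa using hU
      · intro i hi; simp [show ¬ i = 1 by omega]
  | succ q hq ih =>
    intro U S hSU d hU hS hd
    set base := U.powerset.filter (fun V => S ⊆ V ∧ V.card = d 2) with hbase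
    have hmap : ∀ T ∈ chainsF (q+1) U S d, T 2 ∈ base := by
      intro T hT
      rw [mem_chainsF (by omega)] at hT
      obtain ⟨h1, h2, h3, h4, h5⟩ := hT
      rw [hbase, mem_filter, mem_powerset]
      refine ⟨?_, ?_, h4 2 (by omega) (by omega)⟩
      · rw [← h1]; exact nested_subset h3 1 2 (le_refl 1) (by omega) (by omega)
      · rw [← h2]; exact nested_subset h3 2 (q+1) (by omega) (by omega) (le_refl _)
    rw [Finset.card_eq_sum_card_fiberwise hmap]
    have hfib : ∀ V ∈ base, ((chainsF (q+1) U S d).filter (fun T => T 2 = V)).card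
        = ∏ k ∈ Icc 1 (q-1), (d (k+1) - d (q+1)).choose (d (k+2) - d (q+1)) := by
      intro V hV
      rw [hbase, mem_filter, mem_powerset] at hV
      obtain ⟨hVU, hSV, hVcard⟩ := hV
      have := ih V S hSV (fun k => d (k+1)) (by simpa using hVcard) (by simpa using hS)
        (fun k hk1 hk2 => hd (k+1) (by omega) (by omega))
      rw [← this]
      apply Finset.card_nbij' (fun T => (fun i => if i = 0 then ∅ else T (i+1)))
        (fun T' => (fun i => if i = 0 then ∅ else if i = 1 then U else T' (i-1)))
      · intro T hT
        rw [Finset.mem_coe, mem_filter] at hT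
        obtain ⟨hT, hT2⟩ := hT
        rw [Finset.mem_coe]; beta_reduce; rw [mem_chainsF (by omega)] at hT ⊢
        obtain ⟨h1, h2, h3, h4, h5⟩ := hT
        refine ⟨by simpa using hT2, ?_, ?_, ?_, ?_⟩
        · show (if q = 0 then ∅ else T (q+1)) = S
          rw [if_neg (by omega)]; exact h2
        · intro k hk1 hk2
          simp only [if_neg (by omega : ¬ (k+1 = 0)), if_neg (by omega : ¬ (k = 0))]
          exact h3 (k+1) (by omega) (by omega)
        · intro i hi1 hi2
          simp only [if_neg (by omega : ¬ (i = 0))]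
          exact h4 (i+1) (by omega) (by omega)
        · intro i hi
          rcases hi with hi | hi
          · rw [if_pos (by omega)]
          · rw [if_neg (by omega)]
            exact h5 (i+1) (by omega)
      · intro T' hT'
        rw [Finset.mem_coe, mem_chainsF (by omega)] at hT'
        obtain ⟨h1, h2, h3, h4, h5⟩ := hT'
        rw [Finset.mem_coe]; beta_reduce; rw [mem_filter]
        constructor
        · rw [mem_chainsF (by omega)]
          refine ⟨by norm_num, ?_, ?_, ?_, ?_⟩
          · simp only [if_neg (by omega : ¬ (q+1 = 0)), if_neg (by omega : ¬ (q+1 = 1))]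
            simpa using h2
          · intro k hk1 hk2
            by_cases hk : k = 1
            · subst hk
              simp only [if_neg (by omega : ¬ (2 = 0)), if_neg (by omega : ¬ (2 = 1)),
                if_neg (by omega : ¬ (1 = 0)), if_pos rfl]
              rw [show (2:ℕ) - 1 = 1 from rfl, h1]
              exact hVU
            · simp only [if_neg (by omega : ¬ (k+1 = 0)), if_neg (by omega : ¬ (k+1 = 1)),
                if_neg (by omega : ¬ (k = 0)), if_neg hk]
              have := h3 (k-1) (by omega) (by omega)
              rw [show k + 1 - 1 = (k-1) + 1 by omega]
              exact this
          · intro i hi1 hi2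
            by_cases hi : i = 1
            · subst hi; simpa using hU
            · simp only [if_neg (by omega : ¬ (i = 0)), if_neg hi]
              have := h4 (i-1) (by omega) (by omega)
              rwa [show i - 1 + 1 = i by omega] at this
          · intro i hi
            rcases hi with hi | hi
            · rw [if_pos (by omega)]
            · rw [if_neg (by omega : ¬ (i = 0)), if_neg (by omega : ¬ (i = 1))]
              exact h5 (i-1) (by omega)
        · simp only [if_neg (by omega : ¬ (2 = 0)), if_neg (by omega : ¬ (2 = 1))]
          rw [show (2:ℕ) - 1 = 1 from rfl, h1]
      · intro T hT
        rw [Finset.mem_coe, mem_filter, mem_chainsF (by omega)] at hT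
        obtain ⟨⟨h1, h2, h3, h4, h5⟩, hT2⟩ := hT
        funext i
        beta_reduce
        by_cases hi0 : i = 0
        · subst hi0
          rw [if_pos rfl, (h5 0 (by omega)).symm]
        · by_cases hi1 : i = 1
          · subst hi1
            rw [if_neg (by omega), if_pos rfl, h1]
          · rw [if_neg hi0, if_neg hi1]
            show (if i - 1 = 0 then ∅ else T (i - 1 + 1)) = T i
            rw [if_neg (by omega : ¬ (i - 1 = 0)), show i - 1 + 1 = i by omega]
      · intro T' hT'
        rw [Finset.mem_coe, mem_chainsF (by omega)] at hT'
        obtain ⟨h1, h2, h3, h4, h5⟩ := hT'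
        funext i
        beta_reduce
        by_cases hi0 : i = 0
        · subst hi0
          rw [if_pos rfl, (h5 0 (by omega)).symm]
        · rw [if_neg hi0]
          show (if i + 1 = 0 then ∅ else if i + 1 = 1 then U else T' (i + 1 - 1)) = T' i
          rw [if_neg (by omega : ¬ (i + 1 = 0)), if_neg (by omega : ¬ (i + 1 = 1)),
            show i + 1 - 1 = i by omega]
    rw [Finset.sum_congr rfl hfib, Finset.sum_const]
    have hbcard : base.card = (d 1 - d (q+1)).choose (d 2 - d (q+1)) := by
      rw [hbase, card_sandwich U S hSU (d 2) (by rw [hS]; exact hd 2 (by omega) (by omega)),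
        hU, hS]
    rw [hbcard, smul_eq_mul]
    -- now: goal is product over Icc 1 q
    rw [show q + 1 - 1 = q from rfl]
    rw [show Finset.Icc 1 q = insert 1 (Finset.Icc 2 q) by ext x; simp [Finset.mem_Icc]; omega]
    rw [Finset.prod_insert (by simp)]
    congr 1
    rw [show Finset.Icc 2 q = (Finset.Icc 1 (q-1)).map (addRightEmbedding 1) by
      rw [Finset.map_add_right_Icc]; congr 1 <;> omega]
    rw [Finset.prod_map]
    apply Finset.prod_congr rfl
    intro x hx
    simp only [addRightEmbedding_apply]

/-- Counting coordinate subrepresentations of the regular homogeneous representation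
`Reg_p^n(0)` of the quiver of type `Ã_{p,1}`: the number of chains
`T_{p+1} ⊆ T_p ⊆ ⋯ ⊆ T_1 ⊆ [1,n]` with `|T_i| = e_i` and `k−1 ∈ T_1` for every
`k ∈ T_{p+1}` with `k ≥ 2` (encoded as functions `ℕ → Finset ℕ` vanishing outside
`[1,p+1]`) equals
`C(e_1, e_{p+1}) · C(n−e_{p+1}, e_1−e_{p+1}) · ∏_{k=1}^{p−1} C(e_k − e_{p+1}, e_{k+1} − e_{p+1})`. -/
theorem card_coordinate_subreps_regular_Ap1 (p n : ℕ)
    (hp : 2 ≤ p) (hn : 1 ≤ n) (e : ℕ → ℕ) :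
    Set.ncard {T : ℕ → Finset ℕ |
        T 1 ⊆ Finset.Icc 1 n ∧
        (∀ k, 1 ≤ k → k ≤ p → T (k + 1) ⊆ T k) ∧
        (∀ i, 1 ≤ i → i ≤ p + 1 → (T i).card = e i) ∧
        (∀ k ∈ T (p + 1), 2 ≤ k → k - 1 ∈ T 1) ∧
        (∀ i, i < 1 ∨ p + 1 < i → T i = ∅)}
      = intChoose (e 1 : ℤ) (e (p + 1) : ℤ) *
        intChoose ((n : ℤ) - e (p + 1)) ((e 1 : ℤ) - e (p + 1)) *
        ∏ k ∈ Finset.Icc 1 (p - 1),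
          intChoose ((e k : ℤ) - e (p + 1)) ((e (k + 1) : ℤ) - e (p + 1)) := by
  classical
  set F : Finset (ℕ → Finset ℕ) := (funBox (p+1) (Finset.Icc 1 n)).filter
    (fun T => T 1 ⊆ Finset.Icc 1 n ∧
      (∀ k, 1 ≤ k → k ≤ p → T (k + 1) ⊆ T k) ∧
      (∀ i, 1 ≤ i → i ≤ p + 1 → (T i).card = e i) ∧
      (∀ k ∈ T (p + 1), 2 ≤ k → k - 1 ∈ T 1)) with hF
  have memF : ∀ T : ℕ → Finset ℕ, T ∈ F ↔
      (T 1 ⊆ Finset.Icc 1 n ∧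
        (∀ k, 1 ≤ k → k ≤ p → T (k + 1) ⊆ T k) ∧
        (∀ i, 1 ≤ i → i ≤ p + 1 → (T i).card = e i) ∧
        (∀ k ∈ T (p + 1), 2 ≤ k → k - 1 ∈ T 1) ∧
        (∀ i, i < 1 ∨ p + 1 < i → T i = ∅)) := by
    intro T
    rw [hF, Finset.mem_filter, mem_funBox]
    constructor
    · rintro ⟨⟨hbox, hvan⟩, h1, h2, h3, h4⟩
      exact ⟨h1, h2, h3, h4, hvan⟩
    · rintro ⟨h1, h2, h3, h4, hvan⟩
      refine ⟨⟨?_, hvan⟩, h1, h2, h3, h4⟩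
      intro i hi1 hi2
      refine (nested_subset (q := p+1) (fun k hk1 hk2 => h2 k hk1 (by omega)) 1 i
        (le_refl 1) hi1 hi2).trans h1
  have hset : {T : ℕ → Finset ℕ |
      T 1 ⊆ Finset.Icc 1 n ∧
      (∀ k, 1 ≤ k → k ≤ p → T (k + 1) ⊆ T k) ∧
      (∀ i, 1 ≤ i → i ≤ p + 1 → (T i).card = e i) ∧
      (∀ k ∈ T (p + 1), 2 ≤ k → k - 1 ∈ T 1) ∧
      (∀ i, i < 1 ∨ p + 1 < i → T i = ∅)} = (↑F : Set (ℕ → Finset ℕ)) := by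
    ext T
    rw [Set.mem_setOf_eq, Finset.mem_coe, memF]
  rw [hset, Set.ncard_coe_finset]
  by_cases hfeas : (∀ k, 1 ≤ k → k ≤ p → e (p+1) ≤ e k) ∧ e 1 ≤ n
  · obtain ⟨hm_le, ha_n⟩ := hfeas
    have hm1 : e (p+1) ≤ e 1 := hm_le 1 (le_refl 1) (by omega)
    have hmn : e (p+1) ≤ n := hm1.trans ha_n
    -- fiberwise count
    have hmapsto : ∀ T ∈ F, (T 1, T (p+1)) ∈ pairsX n (e 1) (e (p+1)) := by
      intro T hT
      rw [memF] at hT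
      obtain ⟨h1, h2, h3, h4, h5⟩ := hT
      rw [mem_pairsX]
      exact ⟨h1, nested_subset (fun k hk1 hk2 => h2 k hk1 (by omega)) 1 (p+1)
        (le_refl 1) (by omega) (le_refl _), h3 1 (by omega) (by omega),
        h3 (p+1) (by omega) (le_refl _), h4⟩
    rw [Finset.card_eq_sum_card_fiberwise hmapsto]
    have hfib : ∀ z ∈ pairsX n (e 1) (e (p+1)),
        (F.filter (fun T => (T 1, T (p+1)) = z)).card
          = ∏ k ∈ Finset.Icc 1 p, (e k - e (p+1)).choose (e (k+1) - e (p+1)) := by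
      intro z hz
      rw [mem_pairsX] at hz
      obtain ⟨hz1, hz2, hz3, hz4, hz5⟩ := hz
      have heq : F.filter (fun T => (T 1, T (p+1)) = z) = chainsF (p+1) z.1 z.2 e := by
        ext T
        rw [Finset.mem_filter, memF, mem_chainsF (by omega : 1 ≤ p+1), Prod.ext_iff]
        constructor
        · rintro ⟨⟨h1, h2, h3, h4, h5⟩, hp1, hp2⟩
          exact ⟨hp1, hp2, fun k hk1 hk2 => h2 k hk1 (by omega), h3, h5⟩
        · rintro ⟨h1, h2, h3, h4, h5⟩
          refine ⟨⟨h1 ▸ hz1, fun k hk1 hk2 => h3 k hk1 (by omega), h4, ?_, h5⟩, h1, h2⟩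
          rw [h1, h2]
          exact hz5
      rw [heq, chainsF_card (p+1) (by omega) z.1 z.2 hz2 e hz3 hz4
        (fun k hk1 hk2 => by
          rcases Nat.eq_or_lt_of_le hk2 with rfl | hlt
          · exact le_refl _
          · exact hm_le k hk1 (by omega))]
      norm_num
    rw [Finset.sum_congr rfl hfib, Finset.sum_const, (pairs_counts n).1 (e 1) (e (p+1)),
      smul_eq_mul]
    -- now pure arithmetic
    rw [intChoose_coe (e 1) (e (p+1))]
    have hprod : ∏ k ∈ Finset.Icc 1 p, (e k - e (p+1)).choose (e (k+1) - e (p+1))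
        = ∏ k ∈ Finset.Icc 1 (p-1),
            intChoose ((e k : ℤ) - e (p + 1)) ((e (k + 1) : ℤ) - e (p + 1)) := by
      have hsplit : ∏ k ∈ Finset.Icc 1 p, (e k - e (p+1)).choose (e (k+1) - e (p+1))
          = (∏ k ∈ Finset.Icc 1 (p-1), (e k - e (p+1)).choose (e (k+1) - e (p+1)))
            * (e p - e (p+1)).choose (e (p+1) - e (p+1)) := by
        rw [show p = (p-1)+1 by omega, Finset.prod_Icc_succ_top (by omega)]
        rw [show p-1+1 = p by omega]
      rw [hsplit, Nat.sub_self, Nat.choose_zero_right, mul_one]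
      apply Finset.prod_congr rfl
      intro k hk
      rw [Finset.mem_Icc] at hk
      rw [intChoose_sub_coe (e k) (e (k+1)) (e (p+1))
        (hm_le k (by omega) (by omega)) (hm_le (k+1) (by omega) (by omega))]
    rw [← hprod]
  · -- degenerate case: both sides are 0
    have hFempty : F = ∅ := by
      rw [Finset.eq_empty_iff_forall_notMem]
      intro T hT
      rw [memF] at hT
      obtain ⟨h1, h2, h3, h4, h5⟩ := hT
      apply hfeas
      constructor
      · intro k hk1 hk2
        have hsub : T (p+1) ⊆ T k := nested_subset
          (fun j hj1 hj2 => h2 j hj1 (by omega)) k (p+1) hk1 (by omega) (le_refl _)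
        have := Finset.card_le_card hsub
        rw [h3 (p+1) (by omega) (le_refl _), h3 k hk1 (by omega)] at this
        exact this
      · have := Finset.card_le_card h1
        rw [h3 1 (by omega) (by omega), Nat.card_Icc] at this
        omega
    rw [hFempty, Finset.card_empty]
    -- RHS is 0
    push_neg at hfeas
    by_cases hc1 : e 1 < e (p+1)
    · rw [intChoose_coe, Nat.choose_eq_zero_of_lt hc1]
      ring
    · push_neg at hc1
      by_cases hc2 : ∃ k, 1 ≤ k ∧ k ≤ p ∧ e k < e (p+1)
      · obtain ⟨k, hk1, hk2, hk3⟩ := hc2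
        have hk1' : 2 ≤ k := by
          rcases Nat.eq_or_lt_of_le hk1 with rfl | h
          · omega
          · omega
        have : intChoose ((e (k-1) : ℤ) - e (p + 1)) ((e (k-1+1) : ℤ) - e (p + 1)) = 0 := by
          apply intChoose_neg_right
          rw [show k-1+1 = k by omega]
          push_cast
          omega
        rw [Finset.prod_eq_zero (Finset.mem_Icc.mpr ⟨by omega, by omega⟩ :
          k-1 ∈ Finset.Icc 1 (p-1)) this]
        ring
      · push_neg at hc2
        have hn1 : n < e 1 := by
          rcases hfeas (fun k hk1 hk2 => hc2 k hk1 hk2) with h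
          omega
        have : intChoose ((n : ℤ) - e (p + 1)) ((e 1 : ℤ) - e (p + 1)) = 0 := by
          by_cases hmn : e (p+1) ≤ n
          · rw [intChoose_sub_coe n (e 1) (e (p+1)) hmn hc1,
              Nat.choose_eq_zero_of_lt (by omega)]
          · apply intChoose_neg_left
            push_cast
            omega
        rw [this]
        ring
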